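/- Let T = (V,E) be a locally finite tree (a connected acyclic simple graph in which every vertex has finitely many neighbors) containing at least one edge, and let γ ∈ (0,1). Suppose m and m⁺ assign to every ordered pair (i,j) of adjacent vertices real numbers m_{i→j} ∈ [−1,1] and m⁺_{i→j} ∈ [0,1] such that: (a) both m and m⁺ satisfy the recursion m_{i→j} = tanh( Σ_{k ∈ ∂i \ {j}} atanh( γ·m_{k→i} ) ) at every ordered adjacent pair (i,j); (b) |m_{i→j}| ≤ m⁺_{i→j} for every ordered adjacent pair; and (c) m_{i→j}·m_{j→i} = m⁺_{i→j}·m⁺_{j→i} for every edge {i,j}. Then either m_{i→j} = m⁺_{i→j} for all ordered adjacent pairs, or m_{i→j} = −m⁺_{i→j} for all ordered adjacent pairs. -/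
import Mathlib


open Real Finset

/-- the inverse hyperbolic tangent `atanh x = ½ log((1+x)/(1-x))`. -/
noncomputable def atanh (x : ℝ) : ℝ := (1 / 2) * Real.log ((1 + x) / (1 - x))

lemma tanh_formula (x : ℝ) :
    Real.tanh x = (Real.exp (2*x) - 1) / (Real.exp (2*x) + 1) := by
  have he : Real.exp (-x) = (Real.exp x)⁻¹ := Real.exp_neg x
  have hx := Real.exp_pos x
  rw [Real.tanh_eq_sinh_div_cosh, Real.sinh_eq, Real.cosh_eq, two_mul, Real.exp_add, he]
  have h1 : Real.exp x + (Real.exp x)⁻¹ ≠ 0 := by positivity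
  field_simp

lemma atanh_tanh (x : ℝ) : atanh (Real.tanh x) = x := by
  have hE : (0:ℝ) < Real.exp (2*x) := Real.exp_pos _
  rw [tanh_formula]
  unfold atanh
  have h1 : (1 + (Real.exp (2*x) - 1) / (Real.exp (2*x) + 1)) /
      (1 - (Real.exp (2*x) - 1) / (Real.exp (2*x) + 1)) = Real.exp (2*x) := by
    have : Real.exp (2*x) + 1 ≠ 0 := by positivity
    field_simp
    ring
  rw [h1, Real.log_exp]
  ring

lemma tanh_atanh {x : ℝ} (h1 : -1 < x) (h2 : x < 1) : Real.tanh (atanh x) = x := by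
  have hu : (0:ℝ) < (1 + x) / (1 - x) := by
    apply div_pos <;> linarith
  rw [tanh_formula]
  unfold atanh
  have h3 : 2 * ((1:ℝ)/2 * Real.log ((1 + x) / (1 - x))) = Real.log ((1 + x) / (1 - x)) := by ring
  rw [h3, Real.exp_log hu]
  have hne : (1:ℝ) - x ≠ 0 := by linarith
  field_simp
  ring

lemma atanh_zero : atanh 0 = 0 := by simp [atanh]

lemma atanh_neg (x : ℝ) : atanh (-x) = -atanh x := by
  unfold atanh
  rw [show (1 + -x)/(1 - -x) = ((1+x)/(1-x))⁻¹ by rw [inv_div]; ring, Real.log_inv]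
  ring

lemma atanh_le_atanh {a b : ℝ} (h1 : -1 < a) (h : a ≤ b) (h2 : b < 1) :
    atanh a ≤ atanh b := by
  unfold atanh
  have ha : (0:ℝ) < 1 - a := by linarith
  have hb : (0:ℝ) < 1 - b := by linarith
  have hpa : (0:ℝ) < (1 + a) / (1 - a) := by apply div_pos <;> linarith
  have hle : (1 + a) / (1 - a) ≤ (1 + b) / (1 - b) := by
    rw [div_le_div_iff₀ ha hb]; nlinarith
  have := Real.log_le_log hpa hle
  linarith

lemma atanh_nonneg {x : ℝ} (h0 : 0 ≤ x) (h1 : x < 1) : 0 ≤ atanh x := by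
  have := atanh_le_atanh (by norm_num : (-1:ℝ) < 0) h0 h1
  rw [atanh_zero] at this; exact this

lemma eps_mul_atanh {ε : ℝ} (hε : ε = 1 ∨ ε = -1) (y : ℝ) :
    atanh (ε * y) = ε * atanh y := by
  rcases hε with rfl | rfl
  · simp
  · rw [neg_one_mul, atanh_neg, neg_one_mul]

lemma eps_mul_tanh {ε : ℝ} (hε : ε = 1 ∨ ε = -1) (y : ℝ) :
    Real.tanh (ε * y) = ε * Real.tanh y := by
  rcases hε with rfl | rfl
  · simp
  · rw [neg_one_mul, Real.tanh_neg, neg_one_mul]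

lemma eps_sq {ε : ℝ} (hε : ε = 1 ∨ ε = -1) : ε * ε = 1 := by
  rcases hε with rfl | rfl <;> norm_num

lemma eps_le_abs {ε : ℝ} (hε : ε = 1 ∨ ε = -1) (y : ℝ) : ε * y ≤ |y| := by
  rcases hε with rfl | rfl
  · simpa using le_abs_self y
  · rw [neg_one_mul]; exact neg_le_abs y


/-- **Rigidity of message systems on locally finite trees.**
Let `T` be a locally finite tree with at least one edge and `γ ∈ (0,1)`.
If `m` and `m⁺` both satisfy the zero-field BP recursion
`m_{i→j} = tanh(Σ_{k ∈ ∂i\{j}} atanh(γ m_{k→i}))` on ordered adjacent pairs,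
with `m_{i→j} ∈ [-1,1]`, `m⁺_{i→j} ∈ [0,1]`, `|m_{i→j}| ≤ m⁺_{i→j}` and
`m_{i→j} m_{j→i} = m⁺_{i→j} m⁺_{j→i}` on every edge, then `m = m⁺` on all
ordered adjacent pairs or `m = -m⁺` on all ordered adjacent pairs. -/
theorem message_rigidity (V : Type) [DecidableEq V] (T : SimpleGraph V)
    [∀ v, Fintype (T.neighborSet v)]
    (hconn : T.Connected) (hacyc : T.IsAcyclic) (hedge : ∃ u v, T.Adj u v)
    (γ : ℝ) (hγ0 : 0 < γ) (hγ1 : γ < 1)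
    (m mp : V → V → ℝ)
    (hm_range : ∀ i j, T.Adj i j → m i j ∈ Set.Icc (-1 : ℝ) 1)
    (hmp_range : ∀ i j, T.Adj i j → mp i j ∈ Set.Icc (0 : ℝ) 1)
    (hm_rec : ∀ i j, T.Adj i j →
      m i j = Real.tanh (∑ k ∈ T.neighborFinset i \ {j}, atanh (γ * m k i)))
    (hmp_rec : ∀ i j, T.Adj i j →
      mp i j = Real.tanh (∑ k ∈ T.neighborFinset i \ {j}, atanh (γ * mp k i)))
    (habs : ∀ i j, T.Adj i j → |m i j| ≤ mp i j)
    (hprod : ∀ i j, T.Adj i j → m i j * m j i = mp i j * mp j i) :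
    (∀ i j, T.Adj i j → m i j = mp i j) ∨
      (∀ i j, T.Adj i j → m i j = -mp i j) := by
    classical
  -- basic bounds
  have hmpb : ∀ i j, T.Adj i j → 0 ≤ γ * mp i j ∧ γ * mp i j < 1 := by
    intro i j h
    obtain ⟨h0, h1⟩ := hmp_range i j h
    exact ⟨mul_nonneg hγ0.le h0, by nlinarith⟩
  -- membership helper
  have hmem : ∀ {i j k : V}, k ∈ T.neighborFinset i \ {j} → T.Adj k i ∧ k ≠ j := by
    intro i j k hk
    obtain ⟨h1, h2⟩ := Finset.mem_sdiff.1 hk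
    exact ⟨((T.mem_neighborFinset i k).1 h1).symm, by simpa using h2⟩
  have hmem' : ∀ {i j k : V}, T.Adj k i → k ≠ j → k ∈ T.neighborFinset i \ {j} := by
    intro i j k h1 h2
    exact Finset.mem_sdiff.2 ⟨(T.mem_neighborFinset i k).2 h1.symm, by simpa using h2⟩
  -- zero propagation: if mp i k = 0, all incoming messages at i (other than from k) vanish
  have hzero_in : ∀ i k, T.Adj i k → mp i k = 0 → ∀ l, T.Adj l i → l ≠ k → mp l i = 0 := by
    intro i k hik h0 l hli hlk
    have hrec := hmp_rec i k hik
    rw [h0] at hrec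
    have hS : (∑ l ∈ T.neighborFinset i \ {k}, atanh (γ * mp l i)) = 0 := by
      have := congrArg atanh hrec
      rw [atanh_tanh, atanh_zero] at this
      exact this.symm
    have hnn : ∀ l ∈ T.neighborFinset i \ {k}, 0 ≤ atanh (γ * mp l i) := by
      intro l hl
      obtain ⟨hla, _⟩ := hmem hl
      obtain ⟨b0, b1⟩ := hmpb l i hla
      exact atanh_nonneg b0 b1
    have hterm := (Finset.sum_eq_zero_iff_of_nonneg hnn).1 hS l (hmem' hli hlk)
    obtain ⟨b0, b1⟩ := hmpb l i hli
    have : γ * mp l i = 0 := by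
      have := congrArg Real.tanh hterm
      rwa [tanh_atanh (by linarith) b1, Real.tanh_zero] at this
    have hγne : γ ≠ 0 := ne_of_gt hγ0
    exact (mul_eq_zero.1 this).resolve_left hγne
  -- backward sign propagation
  have key_back : ∀ (ε : ℝ), (ε = 1 ∨ ε = -1) → ∀ i j, T.Adj i j → m i j = ε * mp i j →
      ∀ k, T.Adj k i → k ≠ j → m k i = ε * mp k i := by
    intro ε hε i j hij hmij k hki hkj
    set s := T.neighborFinset i \ {j} with hs
    -- equality of the two sums
    have hsum : (∑ l ∈ s, atanh (γ * m l i)) = ε * ∑ l ∈ s, atanh (γ * mp l i) := by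
      have h1 : Real.tanh (∑ l ∈ s, atanh (γ * m l i))
          = Real.tanh (ε * ∑ l ∈ s, atanh (γ * mp l i)) := by
        rw [eps_mul_tanh hε, ← hm_rec i j hij, ← hmp_rec i j hij]
        exact hmij
      have := congrArg atanh h1
      rwa [atanh_tanh, atanh_tanh] at this
    -- each term satisfies atanh (γ (ε m)) ≤ atanh (γ mp)
    have hterm_le : ∀ l ∈ s, atanh (γ * (ε * m l i)) ≤ atanh (γ * mp l i) := by
      intro l hl
      obtain ⟨hla, _⟩ := hmem hl
      obtain ⟨hm1, hm2⟩ := hm_range l i hla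
      have habs1 : |m l i| ≤ 1 := abs_le.2 ⟨hm1, hm2⟩
      have h₁ : ε * m l i ≤ mp l i := le_trans (eps_le_abs hε _) (habs l i hla)
      have h₂ : -1 ≤ ε * m l i := by
        have h := eps_le_abs hε (-(m l i))
        rw [mul_neg, abs_neg] at h
        linarith
      obtain ⟨b0, b1⟩ := hmpb l i hla
      have hlow : -1 < γ * (ε * m l i) := by nlinarith
      have hmid : γ * (ε * m l i) ≤ γ * mp l i := mul_le_mul_of_nonneg_left h₁ hγ0.le
      exact atanh_le_atanh hlow hmid b1
    -- the sum of differences vanishes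
    have hdiff : (∑ l ∈ s, (atanh (γ * mp l i) - atanh (γ * (ε * m l i)))) = 0 := by
      rw [Finset.sum_sub_distrib]
      have h2 : (∑ l ∈ s, atanh (γ * (ε * m l i))) = ε * ∑ l ∈ s, atanh (γ * m l i) := by
        rw [Finset.mul_sum]
        apply Finset.sum_congr rfl
        intro l hl
        rw [show γ * (ε * m l i) = ε * (γ * m l i) by ring, eps_mul_atanh hε]
      rw [h2, hsum, ← mul_assoc, eps_sq hε, one_mul, sub_self]
    have hnn : ∀ l ∈ s, 0 ≤ atanh (γ * mp l i) - atanh (γ * (ε * m l i)) := by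
      intro l hl
      have := hterm_le l hl
      linarith
    have hk0 := (Finset.sum_eq_zero_iff_of_nonneg hnn).1 hdiff k (hmem' hki hkj)
    -- conclude for k
    obtain ⟨hm1, hm2⟩ := hm_range k i hki
    have habs1 : |m k i| ≤ 1 := abs_le.2 ⟨hm1, hm2⟩
    have h₁ : ε * m k i ≤ mp k i := le_trans (eps_le_abs hε _) (habs k i hki)
    have h₂ : -1 ≤ ε * m k i := by
      have h := eps_le_abs hε (-(m k i))
      rw [mul_neg, abs_neg] at h
      linarith
    obtain ⟨b0, b1⟩ := hmpb k i hki
    have heqa : atanh (γ * (ε * m k i)) = atanh (γ * mp k i) := by linarith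
    have hlow : -1 < γ * (ε * m k i) := by nlinarith
    have hup : γ * (ε * m k i) < 1 := by nlinarith
    have : γ * (ε * m k i) = γ * mp k i := by
      have := congrArg Real.tanh heqa
      rwa [tanh_atanh hlow hup, tanh_atanh (by linarith) b1] at this
    have hεm : ε * m k i = mp k i := by
      have hγne : γ ≠ 0 := ne_of_gt hγ0
      exact mul_left_cancel₀ hγne this
    have h5 : m k i = ε * (ε * m k i) := by rw [← mul_assoc, eps_sq hε, one_mul]
    rw [h5, hεm]
  -- forward sign propagation
  have key_out : ∀ (ε : ℝ), (ε = 1 ∨ ε = -1) → ∀ i k, T.Adj i k →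
      (∀ l, T.Adj l i → m l i = ε * mp l i) → m i k = ε * mp i k := by
    intro ε hε i k hik hall
    rw [hm_rec i k hik, hmp_rec i k hik]
    have hsum : (∑ l ∈ T.neighborFinset i \ {k}, atanh (γ * m l i))
        = ε * ∑ l ∈ T.neighborFinset i \ {k}, atanh (γ * mp l i) := by
      rw [Finset.mul_sum]
      apply Finset.sum_congr rfl
      intro l hl
      obtain ⟨hla, _⟩ := hmem hl
      rw [hall l hla, show γ * (ε * mp l i) = ε * (γ * mp l i) by ring, eps_mul_atanh hε]
    rw [hsum, eps_mul_tanh hε]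
  by_cases hdp : ∃ u v, T.Adj u v ∧ 0 < mp u v ∧ 0 < mp v u
  · -- there is a doubly positive edge; extract the sign ε and propagate
    obtain ⟨u, v, huv, hu, hv⟩ := hdp
    have h1 : |m u v| ≤ mp u v := habs u v huv
    have h2 : |m v u| ≤ mp v u := habs v u huv.symm
    have hp := hprod u v huv
    have e1 : |m u v| * |m v u| = mp u v * mp v u := by
      have h3 : |m u v * m v u| = mp u v * mp v u := by
        rw [hp]; exact abs_of_nonneg (by positivity)
      rw [abs_mul] at h3; exact h3
    have eA : |m u v| = mp u v := by
      nlinarith [abs_nonneg (m u v), abs_nonneg (m v u)]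
    have eB : |m v u| = mp v u := by
      nlinarith [abs_nonneg (m u v), abs_nonneg (m v u)]
    have hmain : ∃ ε : ℝ, (ε = 1 ∨ ε = -1) ∧ m u v = ε * mp u v ∧ m v u = ε * mp v u := by
      rcases (abs_eq (le_of_lt hu)).1 eA with h | h
      · refine ⟨1, Or.inl rfl, by rw [one_mul]; exact h, ?_⟩
        rw [one_mul]
        have : mp u v * m v u = mp u v * mp v u := by rw [← hp, h]
        exact mul_left_cancel₀ (ne_of_gt hu) this
      · refine ⟨-1, Or.inr rfl, by rw [neg_one_mul]; exact h, ?_⟩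
        rw [neg_one_mul]
        have : mp u v * (- m v u) = mp u v * mp v u := by
          rw [← hp, h]; ring
        have h4 := mul_left_cancel₀ (ne_of_gt hu) this
        linarith
    obtain ⟨ε, hε, hC1, hC2⟩ := hmain
    -- good vertices
    set good : V → Prop := fun w => ∀ l, T.Adj l w → m l w = ε * mp l w with hgood
    have hgu : good u := by
      intro l hlu
      by_cases hl : l = v
      · subst hl; exact hC2
      · exact key_back ε hε u v huv hC1 l hlu hl
    have hstep : ∀ a b, T.Adj a b → good a → good b := by
      intro a b hab hga l hlb
      by_cases hl : l = a
      · rw [hl]; exact key_out ε hε a b hab hga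
      · exact key_back ε hε b a hab.symm (hga b hab.symm) l hlb hl
    have hwalk : ∀ (a b : V), T.Walk a b → good a → good b := by
      intro a b w
      induction w with
      | nil => exact id
      | cons h p ih => intro ha; exact ih (hstep _ _ h ha)
    have hall : ∀ w : V, good w := by
      intro w
      obtain ⟨p⟩ := hconn.preconnected u w
      exact hwalk u w p hgu
    have hfin : ∀ i j, T.Adj i j → m i j = ε * mp i j := by
      intro i j hij
      exact hall j i hij
    rcases hε with rfl | rfl
    · left; intro i j hij; rw [hfin i j hij, one_mul]
    · right; intro i j hij; rw [hfin i j hij, neg_one_mul]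
  · -- no doubly positive edge: mp vanishes identically, hence so does m
    have step : ∀ a b, T.Adj a b → 0 < mp a b →
        ∃ c, T.Adj c a ∧ 0 < mp c a ∧ mp a b = γ * mp c a := by
      intro a b hab hpos
      have hrec := hmp_rec a b hab
      have hnn : ∀ l ∈ T.neighborFinset a \ {b}, 0 ≤ atanh (γ * mp l a) := by
        intro l hl
        obtain ⟨hla, _⟩ := hmem hl
        obtain ⟨b0, b1⟩ := hmpb l a hla
        exact atanh_nonneg b0 b1
      obtain ⟨c, hc, hcne⟩ : ∃ c ∈ T.neighborFinset a \ {b}, atanh (γ * mp c a) ≠ 0 := by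
        by_contra hcon
        push_neg at hcon
        have : (∑ l ∈ T.neighborFinset a \ {b}, atanh (γ * mp l a)) = 0 :=
          Finset.sum_eq_zero hcon
        rw [this, Real.tanh_zero] at hrec
        exact absurd hrec (ne_of_gt hpos)
      obtain ⟨hca, hcb⟩ := hmem hc
      have hcpos : 0 < mp c a := by
        rcases lt_or_eq_of_le (hmp_range c a hca).1 with h | h
        · exact h
        · exfalso; apply hcne; rw [← h, mul_zero, atanh_zero]
      have hac0 : mp a c = 0 := by
        by_contra h0
        have : 0 < mp a c := lt_of_le_of_ne (hmp_range a c hca.symm).1 (Ne.symm h0)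
        exact hdp ⟨c, a, hca, hcpos, this⟩
      have hz := hzero_in a c hca.symm hac0
      have hsingle : (∑ l ∈ T.neighborFinset a \ {b}, atanh (γ * mp l a))
          = atanh (γ * mp c a) := by
        apply Finset.sum_eq_single_of_mem c hc
        intro l hl hlc
        obtain ⟨hla, _⟩ := hmem hl
        rw [hz l hla hlc, mul_zero, atanh_zero]
      obtain ⟨b0, b1⟩ := hmpb c a hca
      refine ⟨c, hca, hcpos, ?_⟩
      rw [hrec, hsingle, tanh_atanh (by linarith) b1]
    have hall0 : ∀ i j, T.Adj i j → mp i j = 0 := by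
      intro i j hij
      by_contra h0
      have hpos : 0 < mp i j := lt_of_le_of_ne (hmp_range i j hij).1 (Ne.symm h0)
      have chain : ∀ n : ℕ, ∃ p : V × V,
          T.Adj p.1 p.2 ∧ 0 < mp p.1 p.2 ∧ mp i j = γ ^ n * mp p.1 p.2 := by
        intro n
        induction n with
        | zero => exact ⟨(i, j), hij, hpos, by simp⟩
        | succ n ih =>
          obtain ⟨⟨a, b⟩, hab, hpos', heq⟩ := ih
          obtain ⟨c, hca, hcpos, hstep'⟩ := step a b hab hpos'
          exact ⟨(c, a), hca, hcpos, by rw [heq, hstep', pow_succ]; ring⟩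
      obtain ⟨n, hn⟩ := exists_pow_lt_of_lt_one hpos hγ1
      obtain ⟨⟨a, b⟩, hab, hpos', heq⟩ := chain n
      have h1 : mp a b ≤ 1 := (hmp_range a b hab).2
      have h2 : (0:ℝ) < γ ^ n := pow_pos hγ0 n
      nlinarith
    left
    intro i j hij
    have h0 := hall0 i j hij
    have h1 := habs i j hij
    rw [h0] at h1 ⊢
    exact abs_nonpos_iff.mp h1
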